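/- Let s ≥ 1, let γ₀ ∈ ℝ and γ₁ > 0, suppose the identity sequence id(k) = k belongs to D(A^s), and for 1 ≤ m ≤ s define the sequence d_m by d_m(j) = (A^m id)(j) − γ₀·(Σ_{k=0}^{m−1} γ₁^k) − γ₁^m · j. Then d_{m+1} = γ₁^m d_1 + A d_m for m = 1,…,s−1, and consequently d_m = Σ_{k=0}^{m−1} γ₁^{m−1−k} A^k d_1 for m = 1,…,s. -/
import Mathlib


open scoped BigOperators

noncomputable section

/-- Tail sum `q_l = Σ_{k ≥ l} p_k`. -/
def qtail (p : ℕ → ℝ) (l : ℕ) : ℝ := ∑' k, p (l + k)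

/-- The operator `A` on real sequences: `(A v)(l) = (1/q_l) Σ_{k=l}^∞ p_k v(k)`. -/
def opAR (p : ℕ → ℝ) (v : ℕ → ℝ) : ℕ → ℝ :=
  fun l => (1 / qtail p l) * ∑' k, p (l + k) * v (l + k)

/-- Membership in the domain `D(A) = {v : Σ_k p_k |v(k)| < ∞}` (real sequences). -/
def memDAR (p : ℕ → ℝ) (v : ℕ → ℝ) : Prop :=
  Summable fun k => p k * |v k|

/-- Membership in the domain `D(A^m) = {v : A^k v ∈ D(A) for k = 0,…,m-1}`. -/
def memDAiterR (p : ℕ → ℝ) (m : ℕ) (v : ℕ → ℝ) : Prop :=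
  ∀ k < m, memDAR p ((opAR p)^[k] v)

/-- `d_m(j) = (A^m id)(j) − γ₀ Σ_{k=0}^{m−1} γ₁^k − γ₁^m j`. -/
def dseq (p : ℕ → ℝ) (γ₀ γ₁ : ℝ) (m : ℕ) : ℕ → ℝ :=
  fun j => ((opAR p)^[m] (fun k => (k : ℝ))) j -
    γ₀ * (∑ k ∈ Finset.range m, γ₁ ^ k) - γ₁ ^ m * j

lemma summable_tail {p : ℕ → ℝ} (hsp : Summable p) (l : ℕ) :
    Summable fun k => p (l + k) := by
  have := (summable_nat_add_iff l).2 hsp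
  simpa [add_comm] using this

lemma qtail_pos {p : ℕ → ℝ} (hp : ∀ k, 0 < p k) (hsp : Summable p) (l : ℕ) :
    0 < qtail p l :=
  Summable.tsum_pos (summable_tail hsp l) (fun k => (hp _).le) 0 (hp _)

lemma summable_shift {p : ℕ → ℝ} (hp : ∀ k, 0 < p k) {v : ℕ → ℝ}
    (hv : memDAR p v) (l : ℕ) : Summable fun k => p (l + k) * v (l + k) := by
  have h1 : Summable fun k => p k * v k := by
    apply Summable.of_abs
    have : (fun k => |p k * v k|) = fun k => p k * |v k| := by
      funext k; rw [abs_mul, abs_of_pos (hp k)]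
    rw [this]; exact hv
  have := (summable_nat_add_iff l).2 h1
  simpa [add_comm] using this

lemma opAR_affine {p : ℕ → ℝ} (hp : ∀ k, 0 < p k) (hsp : Summable p)
    {u v : ℕ → ℝ} (hu : memDAR p u) (hv : memDAR p v) (a b c : ℝ) :
    opAR p (fun j => a * u j + b * v j + c) =
      fun j => a * opAR p u j + b * opAR p v j + c := by
  funext l
  have hq := (qtail_pos hp hsp l).ne'
  have hsu := summable_shift hp hu l
  have hsv := summable_shift hp hv l
  have hsq := summable_tail hsp l
  have key : (∑' k, p (l + k) * (a * u (l + k) + b * v (l + k) + c))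
      = a * (∑' k, p (l + k) * u (l + k)) + b * (∑' k, p (l + k) * v (l + k))
        + c * qtail p l := by
    have hcg : ∀ k, p (l + k) * (a * u (l + k) + b * v (l + k) + c)
        = a * (p (l + k) * u (l + k)) + (b * (p (l + k) * v (l + k)) + c * p (l + k)) := by
      intro k; ring
    rw [tsum_congr hcg, Summable.tsum_add (hsu.mul_left a) ((hsv.mul_left b).add (hsq.mul_left c)),
      Summable.tsum_add (hsv.mul_left b) (hsq.mul_left c), tsum_mul_left, tsum_mul_left, tsum_mul_left]
    unfold qtail; ring
  simp only [opAR]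
  rw [key]
  field_simp

lemma memDAR_affine {p : ℕ → ℝ} (hp : ∀ k, 0 < p k) (hsp : Summable p)
    {u v : ℕ → ℝ} (hu : memDAR p u) (hv : memDAR p v) (a b c : ℝ) :
    memDAR p (fun j => a * u j + b * v j + c) := by
  unfold memDAR at *
  refine Summable.of_nonneg_of_le (fun k => mul_nonneg (hp k).le (abs_nonneg _))
    (fun k => ?_) ((hu.mul_left |a|).add ((hv.mul_left |b|).add (hsp.mul_left |c|)))
  simp only []
  have h1 : |a * u k + b * v k + c| ≤ |a| * |u k| + |b| * |v k| + |c| := by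
      calc |a * u k + b * v k + c| ≤ |a * u k + b * v k| + |c| := abs_add_le _ _
        _ ≤ |a * u k| + |b * v k| + |c| := by gcongr; exact abs_add_le _ _
        _ = |a| * |u k| + |b| * |v k| + |c| := by rw [abs_mul, abs_mul]
  have := mul_le_mul_of_nonneg_left h1 (hp k).le
  nlinarith [ (hp k).le ]

lemma memDAR_sum {p : ℕ → ℝ} (hp : ∀ k, 0 < p k) (hsp : Summable p)
    (n : ℕ) (c : ℕ → ℝ) (v : ℕ → ℕ → ℝ) (hv : ∀ i < n, memDAR p (v i)) :
    memDAR p (fun j => ∑ i ∈ Finset.range n, c i * v i j) := by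
  induction n with
  | zero =>
      simp only [Finset.range_zero, Finset.sum_empty]
      unfold memDAR
      simpa using summable_zero
  | succ n ih =>
      have heq : (fun j => ∑ i ∈ Finset.range (n + 1), c i * v i j)
          = fun j => 1 * (∑ i ∈ Finset.range n, c i * v i j) + c n * v n j + 0 := by
        funext j; simp [Finset.sum_range_succ]
      rw [heq]
      exact memDAR_affine hp hsp (ih fun i hi => hv i (by omega)) (hv n (by omega)) 1 (c n) 0

lemma opAR_sum {p : ℕ → ℝ} (hp : ∀ k, 0 < p k) (hsp : Summable p)
    (n : ℕ) (c : ℕ → ℝ) (v : ℕ → ℕ → ℝ) (hv : ∀ i < n, memDAR p (v i)) :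
    opAR p (fun j => ∑ i ∈ Finset.range n, c i * v i j) =
      fun j => ∑ i ∈ Finset.range n, c i * opAR p (v i) j := by
  induction n with
  | zero =>
      funext l
      simp [opAR]
  | succ n ih =>
      have heq : (fun j => ∑ i ∈ Finset.range (n + 1), c i * v i j)
          = fun j => 1 * (∑ i ∈ Finset.range n, c i * v i j) + c n * v n j + 0 := by
        funext j; simp [Finset.sum_range_succ]
      rw [heq, opAR_affine hp hsp (memDAR_sum hp hsp n c v fun i hi => hv i (by omega))
        (hv n (by omega)) 1 (c n) 0,
        ih fun i hi => hv i (by omega)]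
      funext j
      simp [Finset.sum_range_succ]

lemma iter_d1_rep (p : ℕ → ℝ) (hp : ∀ k, 0 < p k) (hsp : Summable p)
    (γ₀ γ₁ : ℝ) (s : ℕ) (hid : memDAiterR p s (fun k => (k : ℝ))) :
    ∀ k, k < s → (opAR p)^[k] (dseq p γ₀ γ₁ 1) =
      fun j => 1 * ((opAR p)^[k + 1] (fun k => (k : ℝ))) j +
        (-γ₁) * ((opAR p)^[k] (fun k => (k : ℝ))) j + (-γ₀) := by
  intro k
  induction k with
  | zero =>
      intro _
      funext j
      simp only [Function.iterate_zero_apply, dseq, Finset.range_one,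
        Finset.sum_singleton, pow_zero, pow_one]
      ring
  | succ k ih =>
      intro hk
      have hrep := ih (by omega)
      rw [Function.iterate_succ_apply', hrep,
        opAR_affine hp hsp (hid (k + 1) (by omega)) (hid k (by omega)) 1 (-γ₁) (-γ₀)]
      funext j
      rw [show opAR p ((opAR p)^[k] fun k => (k : ℝ)) = (opAR p)^[k + 1] (fun k => (k : ℝ)) from
        (Function.iterate_succ_apply' _ _ _).symm,
        Function.iterate_succ_apply' (opAR p) (k + 1)]

lemma memDAR_iter_d1 (p : ℕ → ℝ) (hp : ∀ k, 0 < p k) (hsp : Summable p)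
    (γ₀ γ₁ : ℝ) (s : ℕ) (hid : memDAiterR p s (fun k => (k : ℝ))) :
    ∀ k, k + 1 < s → memDAR p ((opAR p)^[k] (dseq p γ₀ γ₁ 1)) := by
  intro k hk
  rw [iter_d1_rep p hp hsp γ₀ γ₁ s hid k (by omega)]
  exact memDAR_affine hp hsp (hid (k + 1) hk) (hid k (by omega)) 1 (-γ₁) (-γ₀)

/-- The recursion `d_{m+1} = γ₁^m d_1 + A d_m` for `m = 1,…,s−1`, and consequently
`d_m = Σ_{k=0}^{m−1} γ₁^{m−1−k} A^k d_1` for `m = 1,…,s`. -/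
theorem dseq_recursion
    (p : ℕ → ℝ) (hp : ∀ k, 0 < p k) (hsum : HasSum p 1)
    (s : ℕ) (hs : 1 ≤ s) (γ₀ : ℝ) (γ₁ : ℝ) (hγ₁ : 0 < γ₁)
    (hid : memDAiterR p s (fun k => (k : ℝ))) :
    (∀ m, 1 ≤ m → m ≤ s - 1 →
        dseq p γ₀ γ₁ (m + 1) =
          fun j => γ₁ ^ m * dseq p γ₀ γ₁ 1 j + opAR p (dseq p γ₀ γ₁ m) j) ∧
      (∀ m, 1 ≤ m → m ≤ s →
        dseq p γ₀ γ₁ m =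
          fun j => ∑ k ∈ Finset.range m,
            γ₁ ^ (m - 1 - k) * ((opAR p)^[k] (dseq p γ₀ γ₁ 1)) j) := by
  have hsp : Summable p := hsum.summable
  have part1 : ∀ m, 1 ≤ m → m ≤ s - 1 →
      dseq p γ₀ γ₁ (m + 1) =
        fun j => γ₁ ^ m * dseq p γ₀ γ₁ 1 j + opAR p (dseq p γ₀ γ₁ m) j := by
    intro m hm1 hms
    have hms' : m < s := by omega
    have hdm : dseq p γ₀ γ₁ m = fun j => 1 * ((opAR p)^[m] (fun k => (k : ℝ))) j +
        (-(γ₁ ^ m)) * ((fun k => (k : ℝ)) j) + (-(γ₀ * ∑ k ∈ Finset.range m, γ₁ ^ k)) := by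
      funext j; simp only [dseq]; ring
    have hid0 : memDAR p (fun k => (k : ℝ)) := by
      have := hid 0 (by omega); simpa using this
    rw [hdm, opAR_affine hp hsp (hid m hms') hid0 1 (-(γ₁ ^ m))
      (-(γ₀ * ∑ k ∈ Finset.range m, γ₁ ^ k))]
    funext j
    simp only [dseq, Function.iterate_succ_apply', Function.iterate_one,
      Function.iterate_zero_apply, Finset.sum_range_succ, Finset.range_one,
      Finset.sum_singleton, pow_zero, pow_one]
    ring
  refine ⟨part1, ?_⟩
  intro m
  induction m with
  | zero => intro h; omega
  | succ n ih =>
      intro _ hms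
      rcases Nat.eq_zero_or_pos n with h0 | hn
      · subst h0
        funext j
        simp
      · have ihr := ih hn (by omega)
        rw [part1 n hn (by omega), ihr,
          opAR_sum hp hsp n (fun k => γ₁ ^ (n - 1 - k))
            (fun k => (opAR p)^[k] (dseq p γ₀ γ₁ 1))
            (fun i hi => memDAR_iter_d1 p hp hsp γ₀ γ₁ s hid i (by omega))]
        funext j
        simp only []
        rw [Finset.sum_range_succ']
        have hterm : ∀ i ∈ Finset.range n,
            γ₁ ^ (n - 1 - i) * opAR p ((opAR p)^[i] (dseq p γ₀ γ₁ 1)) j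
              = γ₁ ^ (n + 1 - 1 - (i + 1)) * ((opAR p)^[i + 1] (dseq p γ₀ γ₁ 1)) j := by
          intro i hi
          rw [Function.iterate_succ_apply']
          congr 2
          omega
        rw [Finset.sum_congr rfl hterm]
        simp only [Function.iterate_zero_apply, Nat.add_sub_cancel, Nat.sub_zero]
        ring
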